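/- arXiv:1804.04100 — 2 statements merged into one kernel-verified Lean document; each statement's English description precedes it below -/
import Mathlib

section
/- The Kenmotsu curve with parameter b = 1 traces circles: with x₁(s) = ∫_0^s (1 + sin(hr))/√(2 + 2 sin(hr)) dr and y₁(s) = (1/h)√(2 + 2 sin(hs)), under the substitution cos(θ/2) = (h/2)y₁(s) for s ∈ (-π/(2h), π/(2h)), one has (x₁(s) - √2/h)² + y₁(s)² = 4/h² for all s in that interval. -/
open Real MeasureTheory

theorem kenmotsu_b_one_traces_circle (h : ℝ) (hh : 0 < h)
    (x₁ y₁ : ℝ → ℝ)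
    (hx₁ : ∀ s : ℝ, x₁ s = ∫ r in (0:ℝ)..s, (1 + Real.sin (h * r)) / Real.sqrt (2 + 2 * Real.sin (h * r)))
    (hy₁ : ∀ s : ℝ, y₁ s = (1 / h) * Real.sqrt (2 + 2 * Real.sin (h * s))) :
    ∀ s ∈ Set.Ioo (-(π / (2 * h))) (π / (2 * h)),
      (x₁ s - Real.sqrt 2 / h) ^ 2 + (y₁ s) ^ 2 = 4 / h ^ 2 := by
  intro s hs
  obtain ⟨hs1, hs2⟩ := hs
  have hπ : (0:ℝ) < π := Real.pi_pos
  have hsqrt2 : (0:ℝ) < Real.sqrt 2 := Real.sqrt_pos.mpr (by norm_num)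
  have hsq2 : (Real.sqrt 2) ^ 2 = 2 := Real.sq_sqrt (by norm_num)
  -- basic bound on points of uIcc 0 s
  have hmem : ∀ r ∈ Set.uIcc (0:ℝ) s, -(π/4) < h * r / 2 ∧ h * r / 2 < π/4 := by
    intro r hr
    rw [Set.uIcc_eq_union] at hr
    have hb : -(π / (2*h)) < r ∧ r < π / (2*h) := by
      rcases hr with hr | hr
      · exact ⟨by nlinarith [hr.1], by nlinarith [hr.2]⟩
      · exact ⟨by nlinarith [hr.1], by nlinarith [hr.2]⟩
    have hhalf : h * (π / (2*h)) = π/2 := by field_simp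
    constructor <;>
      nlinarith [mul_lt_mul_of_pos_left hb.1 hh, mul_lt_mul_of_pos_left hb.2 hh, hhalf]
  -- positivity of cos + sin on the relevant range
  have hpos : ∀ r ∈ Set.uIcc (0:ℝ) s,
      0 < Real.cos (h * r / 2) + Real.sin (h * r / 2) := by
    intro r hr
    obtain ⟨h1, h2⟩ := hmem r hr
    set x := h * r / 2
    have hsinpos : 0 < Real.sin (x + π/4) :=
      Real.sin_pos_of_pos_of_lt_pi (by linarith) (by linarith)
    rw [Real.sin_add, Real.cos_pi_div_four, Real.sin_pi_div_four] at hsinpos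
    nlinarith [hsinpos, hsqrt2]
  -- key algebraic identity
  have hiden : ∀ r : ℝ, 2 + 2 * Real.sin (h * r)
      = 2 * (Real.cos (h * r / 2) + Real.sin (h * r / 2)) ^ 2 := by
    intro r
    have h1 : Real.sin (h * r) = 2 * Real.sin (h * r / 2) * Real.cos (h * r / 2) := by
      have h1' := Real.sin_two_mul (h * r / 2)
      rw [show 2 * (h * r / 2) = h * r from by ring] at h1'
      exact h1'
    have h2 := Real.sin_sq_add_cos_sq (h * r / 2)
    nlinarith [h1, h2]
  -- sqrt of the identity
  have hsqrtiden : ∀ r ∈ Set.uIcc (0:ℝ) s,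
      Real.sqrt (2 + 2 * Real.sin (h * r))
        = Real.sqrt 2 * (Real.cos (h * r / 2) + Real.sin (h * r / 2)) := by
    intro r hr
    have hp := hpos r hr
    rw [hiden r, Real.sqrt_mul (by norm_num), Real.sqrt_sq hp.le]
  -- antiderivative
  set F : ℝ → ℝ := fun r => Real.sqrt 2 / h *
    (Real.sin (h * r / 2) - Real.cos (h * r / 2) + 1) with hF
  have hderiv : ∀ r ∈ Set.uIcc (0:ℝ) s,
      HasDerivAt F ((1 + Real.sin (h * r)) / Real.sqrt (2 + 2 * Real.sin (h * r))) r := by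
    intro r hr
    have hg : HasDerivAt (fun r : ℝ => h * r / 2) (h / 2) r := by
      simpa using ((hasDerivAt_id r).const_mul h).div_const 2
    have hsin : HasDerivAt (fun r : ℝ => Real.sin (h * r / 2))
        (Real.cos (h * r / 2) * (h / 2)) r := (Real.hasDerivAt_sin _).comp r hg
    have hcos : HasDerivAt (fun r : ℝ => Real.cos (h * r / 2))
        (-Real.sin (h * r / 2) * (h / 2)) r := (Real.hasDerivAt_cos _).comp r hg
    have hFd : HasDerivAt F (Real.sqrt 2 / h *
        ((Real.cos (h * r / 2) * (h / 2)) - (-Real.sin (h * r / 2) * (h / 2)))) r := by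
      exact (((hsin.sub hcos).add_const 1).const_mul (Real.sqrt 2 / h))
    convert hFd using 1
    have hp := hpos r hr
    rw [hsqrtiden r hr]
    have h1sin : 1 + Real.sin (h * r)
        = (Real.cos (h * r / 2) + Real.sin (h * r / 2)) ^ 2 := by
      have := hiden r; linarith
    rw [h1sin]
    field_simp
    linear_combination (-(Real.cos (h * r / 2) + Real.sin (h * r / 2))) * hsq2
  -- continuity / integrability of the integrand
  have hcont : IntervalIntegrable
      (fun r => (1 + Real.sin (h * r)) / Real.sqrt (2 + 2 * Real.sin (h * r)))
      volume 0 s := by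
    apply ContinuousOn.intervalIntegrable
    apply ContinuousOn.div
    · exact (continuous_const.add (Real.continuous_sin.comp (continuous_const.mul continuous_id))).continuousOn
    · exact (Real.continuous_sqrt.comp
        (continuous_const.add (continuous_const.mul
          (Real.continuous_sin.comp (continuous_const.mul continuous_id))))).continuousOn
    · intro r hr
      have := hpos r hr
      rw [hsqrtiden r hr]
      positivity
  have hint := intervalIntegral.integral_eq_sub_of_hasDerivAt hderiv hcont
  have hF0 : F 0 = 0 := by simp [hF]
  have hxval : x₁ s = Real.sqrt 2 / h *
      (Real.sin (h * s / 2) - Real.cos (h * s / 2) + 1) := by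
    rw [hx₁ s, hint, hF0, hF]; ring
  have hsmem : s ∈ Set.uIcc (0:ℝ) s := Set.right_mem_uIcc
  have hyval : y₁ s = (1 / h) * (Real.sqrt 2 * (Real.cos (h * s / 2) + Real.sin (h * s / 2))) := by
    rw [hy₁ s, hsqrtiden s hsmem]
  rw [hxval, hyval]
  have hpy := Real.sin_sq_add_cos_sq (h * s / 2)
  field_simp
  nlinarith [hsq2, hpy, sq_nonneg (Real.sin (h * s / 2) - Real.cos (h * s / 2))]
end

section
/- For N ≥ 2 and α ∈ (0,1), the nonlocal mean curvature of the unit sphere S^{N-1} ⊂ ℝ^N, given at p ∈ S^{N-1} by the principal value H = lim_{ε→0} ∫_{ℝ^N\B_ε(p)} τ_B(y)|y-p|^{-(N+α)} dy with B the open unit ball, exists, is independent of the point p, and is strictly positive. -/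
open MeasureTheory Filter Metric Set
open scoped ENNReal NNReal

/-- For `E ⊆ ℝ^N`, `τ_E = 1_{ℝ^N \ E} - 1_E`. -/
noncomputable def tauInd {X : Type*} (E : Set X) (x : X) : ℝ :=
  Set.indicator Eᶜ (fun _ => (1:ℝ)) x - Set.indicator E (fun _ => (1:ℝ)) x

noncomputable section NMCaux
variable {N : ℕ}

local notation "𝔼" => EuclideanSpace ℝ (Fin N)

def Smap (p : 𝔼) : 𝔼 ≃ₗᵢ[ℝ] 𝔼 := Submodule.reflection (ℝ ∙ p)ᗮ

def Rmap (p : 𝔼) (y : 𝔼) : 𝔼 := Smap p y + (2:ℝ) • p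

lemma Smap_self (p : 𝔼) : Smap p p = -p :=
  Submodule.reflection_orthogonalComplement_singleton_eq_neg p

lemma Rmap_involutive (p : 𝔼) : Function.Involutive (Rmap p) := by
  intro y
  simp only [Rmap, map_add, LinearIsometryEquiv.map_smul]
  rw [Smap, Submodule.reflection_reflection, ← Smap, Smap_self]
  module

lemma Rmap_sub (p y : 𝔼) : Rmap p y - p = Smap p (y - p) := by
  rw [map_sub, Smap_self]; simp [Rmap]; module

lemma norm_Rmap_sub (p y : 𝔼) : ‖Rmap p y - p‖ = ‖y - p‖ := by
  rw [Rmap_sub]; exact (Smap p).norm_map _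

lemma norm_Rmap_sq (p : 𝔼) (hp : ‖p‖ = 1) (y : 𝔼) :
    ‖Rmap p y‖ ^ 2 = ‖y‖ ^ 2 + 4 * (1 - inner ℝ y p : ℝ) := by
  have h1 : (inner ℝ (Smap p y) ((2:ℝ) • p) : ℝ) = -2 * inner ℝ y p := by
    have : (inner ℝ (Smap p y) (Smap p p) : ℝ) = inner ℝ y p := (Smap p).inner_map_map y p
    rw [Smap_self] at this
    rw [real_inner_smul_right]
    simp only [inner_neg_right] at this
    linarith
  have := norm_add_sq_real (Smap p y) ((2:ℝ) • p)
  rw [Rmap]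
  rw [this, h1, (Smap p).norm_map, norm_smul]
  simp [hp]
  ring

lemma one_lt_norm_Rmap (p : 𝔼) (hp : ‖p‖ = 1) {y : 𝔼} (hy : ‖y‖ < 1) : 1 < ‖Rmap p y‖ := by
  have h1 : (inner ℝ y p : ℝ) ≤ ‖y‖ := by
    have := real_inner_le_norm y p
    rwa [hp, mul_one] at this
  have h2 := norm_Rmap_sq p hp y
  nlinarith [norm_nonneg (Rmap p y), norm_nonneg y]

lemma measurePreserving_Rmap (p : 𝔼) : MeasurePreserving (Rmap p) volume volume :=
  (measurePreserving_add_right volume ((2:ℝ) • p)).comp (Smap p).measurePreserving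

def RmapHomeo (p : 𝔼) : 𝔼 ≃ₜ 𝔼 where
  toFun := Rmap p
  invFun := Rmap p
  left_inv := Rmap_involutive p
  right_inv := Rmap_involutive p
  continuous_toFun := ((Smap p).continuous).add continuous_const
  continuous_invFun := ((Smap p).continuous).add continuous_const

lemma measurableEmbedding_Rmap (p : 𝔼) : MeasurableEmbedding (Rmap p) :=
  (RmapHomeo p).measurableEmbedding

def Dset (p : 𝔼) : Set 𝔼 := {y | 1 ≤ ‖y‖ ∧ 1 ≤ ‖Rmap p y‖}

lemma measurableSet_Dset (p : 𝔼) : MeasurableSet (Dset p) := by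
  have : IsClosed (Dset p) :=
    (isClosed_le continuous_const continuous_norm).inter
      (isClosed_le continuous_const (continuous_norm.comp (RmapHomeo p).continuous))
  exact this.measurableSet

lemma integrableOn_rpow_compl_ball (p : 𝔼) {s ε : ℝ} (hs : (N:ℝ) < s) (hε : 0 < ε) :
    IntegrableOn (fun y : 𝔼 => ‖y - p‖ ^ (-s)) (ball p ε)ᶜ := by
  have hbig : Integrable (fun y : 𝔼 => ((1+ε)/ε) ^ s * (1 + ‖y - p‖) ^ (-s)) := by
    have h0 : Integrable (fun y : 𝔼 => (1 + ‖y‖) ^ (-s)) := by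
      apply integrable_one_add_norm (E := 𝔼)
      rwa [finrank_euclideanSpace, Fintype.card_fin]
    exact ((h0.comp_sub_right p)).const_mul _
  refine (hbig.integrableOn).mono' ?_ ?_
  · apply Measurable.aestronglyMeasurable (by fun_prop)
  · rw [ae_restrict_iff' measurableSet_ball.compl]
    refine ae_of_all _ fun y hy => ?_
    have hyd : ε ≤ ‖y - p‖ := by
      simpa [mem_ball, dist_eq_norm] using hy
    have hy0 : 0 < ‖y - p‖ := lt_of_lt_of_le hε hyd
    rw [Real.norm_eq_abs, abs_of_nonneg (Real.rpow_nonneg (norm_nonneg _) _)]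
    -- goal: ‖y-p‖ ^ (-s) ≤ ((1+ε)/ε)^s * (1+‖y-p‖)^(-s)
    have key : (1 + ‖y - p‖) ≤ (1+ε)/ε * ‖y - p‖ := by
      rw [div_mul_eq_mul_div, le_div_iff₀ hε]
      ring_nf
      nlinarith
    have ha : 0 < ‖y - p‖ ^ s := Real.rpow_pos_of_pos hy0 s
    have hb : (0:ℝ) < (1 + ‖y - p‖) ^ s := Real.rpow_pos_of_pos (by positivity) s
    have h3 : (1 + ‖y - p‖) ^ s ≤ ((1+ε)/ε) ^ s * ‖y - p‖ ^ s := by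
      rw [← Real.mul_rpow (by positivity) (norm_nonneg _)]
      exact Real.rpow_le_rpow (by positivity) key (le_of_lt (lt_of_le_of_lt (Nat.cast_nonneg N) hs))
    rw [Real.rpow_neg (norm_nonneg _), Real.rpow_neg (by positivity),
      ← one_div, ← one_div, mul_one_div, div_le_div_iff₀ ha hb, one_mul]
    linarith
lemma abs_coord_le (x : 𝔼) (i : Fin N) : |x i| ≤ ‖x‖ := by
  rw [EuclideanSpace.norm_eq]
  rw [← Real.sqrt_sq_eq_abs]
  apply Real.sqrt_le_sqrt
  have := Finset.single_le_sum (f := fun j => ‖x j‖ ^ 2) (fun j _ => sq_nonneg _) (Finset.mem_univ i)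
  simpa [Real.norm_eq_abs, sq_abs] using this

variable [NeZero N]

def pzero : 𝔼 := EuclideanSpace.single 0 1

lemma pzero_norm : ‖(pzero : 𝔼)‖ = 1 := by
  simp [pzero, EuclideanSpace.norm_single]

lemma inner_pzero (y : 𝔼) : (inner ℝ y (pzero : 𝔼) : ℝ) = y 0 := by
  simp [pzero, EuclideanSpace.inner_single_right]

lemma volume_slab_le {r : ℝ} (hr : 0 < r) :
    volume {y : 𝔼 | ‖y - pzero‖ < r ∧ |(inner ℝ y (pzero:𝔼) : ℝ) - 1| ≤ r^2/2}
      ≤ ENNReal.ofReal ((2*r)^(N+1)) := by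
  classical
  set B : Fin N → Set ℝ := fun i => if i = 0 then Icc (1 - r^2/2) (1+r^2/2) else Icc (-r) r with hB
  have hsub : {y : 𝔼 | ‖y - pzero‖ < r ∧ |(inner ℝ y (pzero:𝔼) : ℝ) - 1| ≤ r^2/2}
      ⊆ (⇑((MeasurableEquiv.toLp 2 (Fin N → ℝ)).symm)) ⁻¹' (univ.pi B) := by
    intro y hy
    obtain ⟨h1, h2⟩ := hy
    intro i _
    have hcoord : ((MeasurableEquiv.toLp 2 (Fin N → ℝ)).symm) y i = y i := rfl
    rw [hB]
    by_cases hi : i = 0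
    · subst hi
      simp only [if_pos rfl]
      rw [inner_pzero] at h2
      rw [hcoord]
      constructor <;> [linarith [abs_le.mp h2 |>.1]; linarith [abs_le.mp h2 |>.2]]
    · simp only [if_neg hi]
      have := abs_coord_le (y - pzero) i
      have hz : (y - pzero : 𝔼) i = y i - pzero i := rfl
      have hpz : (pzero : 𝔼) i = 0 := by
        simp [pzero, EuclideanSpace.single_apply, hi]
      rw [hz, hpz, sub_zero] at this
      have h3 : |y i| ≤ r := le_trans this (le_of_lt h1)
      rw [hcoord]
      exact abs_le.mp h3
  calc volume {y : 𝔼 | ‖y - pzero‖ < r ∧ |(inner ℝ y (pzero:𝔼) : ℝ) - 1| ≤ r^2/2}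
      ≤ volume ((⇑((MeasurableEquiv.toLp 2 (Fin N → ℝ)).symm)) ⁻¹' (univ.pi B)) :=
        measure_mono hsub
    _ = (volume : Measure (∀ _ : Fin N, ℝ)) (univ.pi B) := by
        rw [(EuclideanSpace.volume_preserving_symm_measurableEquiv_toLp (Fin N)).measure_preimage]
        refine (MeasurableSet.univ_pi (fun i => ?_)).nullMeasurableSet
        by_cases h : i = 0 <;> simp [hB, h, measurableSet_Icc]
    _ = ∏ i : Fin N, volume (B i) := volume_pi_pi B
    _ ≤ ENNReal.ofReal ((2*r)^(N+1)) := by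
        obtain ⟨M, rfl⟩ : ∃ M, N = M + 1 := ⟨N-1, (Nat.succ_pred_eq_of_pos (NeZero.pos N)).symm⟩
        rw [Fin.prod_univ_succ]
        have h0 : volume (B 0) = ENNReal.ofReal (r^2) := by
          have : B 0 = Icc (1 - r^2/2) (1+r^2/2) := by rw [hB]; simp
          rw [this, Real.volume_Icc]; congr 1; ring
        have hsucc : ∀ i : Fin M, volume (B i.succ) = ENNReal.ofReal (2*r) := by
          intro i
          have : B i.succ = Icc (-r) r := by rw [hB]; simp [Fin.succ_ne_zero i]
          rw [this, Real.volume_Icc]; congr 1; ring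
        rw [h0]
        simp only [hsucc]
        rw [Finset.prod_const, Finset.card_univ, Fintype.card_fin]
        calc ENNReal.ofReal (r^2) * ENNReal.ofReal (2*r) ^ M
            ≤ ENNReal.ofReal ((2*r)^2) * ENNReal.ofReal (2*r) ^ M := by
              gcongr
              nlinarith
          _ = ENNReal.ofReal ((2*r)^(M+1+1)) := by
              rw [← ENNReal.ofReal_pow (by positivity), ← ENNReal.ofReal_mul (by positivity)]
              congr 1
              ring



omit [NeZero N] in
lemma Dset_slab (p : 𝔼) (hp : ‖p‖ = 1) {y : 𝔼} (hy : y ∈ Dset p) :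
    2 * |(inner ℝ y p : ℝ) - 1| ≤ ‖y - p‖^2 := by
  obtain ⟨h1, h2⟩ := hy
  have hRsq := norm_Rmap_sq p hp y
  have hysq : ‖y‖^2 = ‖y - p‖^2 + 2*((inner ℝ y p : ℝ) - 1) + 1 := by
    have := norm_add_sq_real (y - p) p
    have hip : (inner ℝ (y - p) p : ℝ) = (inner ℝ y p : ℝ) - 1 := by
      rw [inner_sub_left, real_inner_self_eq_norm_sq, hp]
      norm_num
    simp only [sub_add_cancel] at this
    rw [this, hip, hp]
    ring
  have h1' : 1 ≤ ‖y‖^2 := by nlinarith [norm_nonneg y]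
  have h2' : 1 ≤ ‖Rmap p y‖^2 := by nlinarith [norm_nonneg (Rmap p y)]
  rw [hRsq, hysq] at h2'
  rw [hysq] at h1'
  rcases abs_cases ((inner ℝ y p : ℝ) - 1) with ⟨he, _⟩ | ⟨he, _⟩ <;> rw [he] <;> nlinarith

lemma rpow_two_identity (k : ℕ) (s : ℝ) (M : ℕ) :
    ((2⁻¹:ℝ)^(k+1)) ^ (-s) * (2*(2⁻¹:ℝ)^k)^(M+1)
      = (2:ℝ)^(s + ((M:ℝ)+1)) * ((2:ℝ)^(s - ((M:ℝ)+1)))^k := by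
  have h2 : (0:ℝ) < 2 := two_pos
  have e1 : (2⁻¹:ℝ) = (2:ℝ)^(-1:ℝ) := by rw [Real.rpow_neg_one]
  have epow : ∀ (m : ℕ) (a : ℝ), ((2:ℝ)^a)^m = (2:ℝ)^(a*m) := by
    intro m a
    rw [← Real.rpow_natCast ((2:ℝ)^a) m, ← Real.rpow_mul h2.le]
  have e2 : ((2⁻¹:ℝ)^(k+1)) ^ (-s) = (2:ℝ)^(((k:ℝ)+1)*s) := by
    rw [e1, epow, ← Real.rpow_mul h2.le]
    push_cast
    ring_nf
  have e3 : (2*(2⁻¹:ℝ)^k)^(M+1) = (2:ℝ)^((1-(k:ℝ))*((M:ℝ)+1)) := by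
    rw [e1, epow]
    have : (2:ℝ) * (2:ℝ)^(-1*(k:ℝ)) = (2:ℝ)^(1 + -1*(k:ℝ)) := by
      rw [Real.rpow_add h2, Real.rpow_one]
    rw [this, epow]
    push_cast
    ring_nf
  rw [e2, e3, epow, ← Real.rpow_add h2, ← Real.rpow_add h2]
  ring_nf

lemma integrableOn_Dset [NeZero N] {s : ℝ} (hNs : (N:ℝ) < s) (hs1 : s < N+1) :
    IntegrableOn (fun y : 𝔼 => ‖y - pzero‖ ^ (-s)) (Dset pzero) := by
  have hc : (0:ℝ) < 2⁻¹ := by norm_num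
  have hmeas : AEStronglyMeasurable (fun y : 𝔼 => ‖y - pzero‖ ^ (-s)) volume :=
    Measurable.aestronglyMeasurable (by fun_prop)
  have hDm := measurableSet_Dset (pzero : 𝔼)
  have houter : IntegrableOn (fun y : 𝔼 => ‖y - pzero‖ ^ (-s)) (Dset pzero \ ball pzero 1) :=
    (integrableOn_rpow_compl_ball pzero hNs one_pos).mono_set (fun y hy => hy.2)
  have hinner : IntegrableOn (fun y : 𝔼 => ‖y - pzero‖ ^ (-s)) (Dset pzero ∩ ball pzero 1) := by
    refine ⟨hmeas.restrict, ?_⟩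
    rw [hasFiniteIntegral_iff_ofReal (ae_of_all _ fun y => Real.rpow_nonneg (norm_nonneg _) _)]
    set S : Set 𝔼 := Dset pzero ∩ ball pzero 1 with hS
    set w : 𝔼 → ℝ≥0∞ := fun y => ENNReal.ofReal (‖y - pzero‖ ^ (-s)) with hw
    show (∫⁻ y in S, w y ∂volume) < ⊤
    set T : ℕ → Set 𝔼 := fun k =>
      (Dset pzero ∩ {y | (2⁻¹:ℝ)^(k+1) ≤ ‖y - pzero‖}) ∩ ball pzero ((2⁻¹:ℝ)^k) with hT
    have hSsub : S \ {pzero} ⊆ ⋃ k, T k := by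
      rintro y ⟨⟨hyD, hyb⟩, hyne⟩
      have hd0 : 0 < ‖y - pzero‖ := by
        rw [norm_pos_iff, sub_ne_zero]
        simpa using hyne
      have hd1 : ‖y - pzero‖ < 1 := by simpa [mem_ball, dist_eq_norm] using hyb
      have hex : ∃ n, (2⁻¹:ℝ)^n ≤ ‖y - pzero‖ := by
        obtain ⟨n, hn⟩ := exists_pow_lt_of_lt_one hd0 (by norm_num : (2⁻¹:ℝ) < 1)
        exact ⟨n, hn.le⟩
      classical
      have hnP : (2⁻¹:ℝ)^(Nat.find hex) ≤ ‖y - pzero‖ := Nat.find_spec hex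
      have hn0 : Nat.find hex ≠ 0 := by
        intro h
        rw [h, pow_zero] at hnP
        linarith
      obtain ⟨k, hk⟩ := Nat.exists_eq_succ_of_ne_zero hn0
      have hku : ¬ ((2⁻¹:ℝ)^k ≤ ‖y - pzero‖) := Nat.find_min hex (by omega)
      rw [hk] at hnP
      refine mem_iUnion.mpr ⟨k, ⟨⟨hyD, hnP⟩, ?_⟩⟩
      rw [mem_ball, dist_eq_norm]
      exact lt_of_not_ge hku
    have hSae : S =ᵐ[volume] ((S \ {pzero} : Set 𝔼)) := by
      rw [ae_eq_set]
      constructor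
      · refine measure_mono_null (t := ({pzero} : Set 𝔼)) ?_ (measure_singleton _)
        intro y hy
        simp only [mem_diff, mem_singleton_iff, not_and, not_not] at hy ⊢
        exact hy.2 hy.1
      · refine measure_mono_null (t := (∅ : Set 𝔼)) ?_ measure_empty
        intro y hy
        exact (hy.2 hy.1.1).elim
    have hmeasT : ∀ k, MeasurableSet (T k) := by
      intro k
      exact ((measurableSet_Dset _).inter
        (measurableSet_le measurable_const (by fun_prop))).inter measurableSet_ball
    have hTk : ∀ k, (∫⁻ y in T k, w y ∂volume)
        ≤ ENNReal.ofReal ((2:ℝ)^(s + ((N:ℝ)+1))) * (ENNReal.ofReal ((2:ℝ)^(s - ((N:ℝ)+1))))^k := by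
      intro k
      have hb1 : (∫⁻ y in T k, w y ∂volume)
          ≤ ENNReal.ofReal (((2⁻¹:ℝ)^(k+1))^(-s)) * volume (T k) := by
        rw [← setLIntegral_const (T k) _]
        apply setLIntegral_mono' (hmeasT k)
        intro y hy
        apply ENNReal.ofReal_le_ofReal
        exact Real.rpow_le_rpow_of_nonpos (pow_pos hc _) hy.1.2
          (neg_nonpos.mpr (le_of_lt (lt_of_le_of_lt (Nat.cast_nonneg N) hNs)))
      have hb2 : volume (T k) ≤ ENNReal.ofReal ((2*(2⁻¹:ℝ)^k)^(N+1)) := by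
        have hrk : (0:ℝ) < (2⁻¹:ℝ)^k := pow_pos hc k
        refine le_trans (measure_mono ?_) (volume_slab_le hrk)
        rintro y ⟨⟨hyD, _⟩, hyb⟩
        have hdlt : ‖y - pzero‖ < (2⁻¹:ℝ)^k := by simpa [mem_ball, dist_eq_norm] using hyb
        have hslab := Dset_slab pzero pzero_norm hyD
        refine ⟨hdlt, ?_⟩
        nlinarith [abs_nonneg ((inner ℝ y (pzero:𝔼) : ℝ) - 1), norm_nonneg (y - pzero)]
      calc (∫⁻ y in T k, w y ∂volume)
          ≤ ENNReal.ofReal (((2⁻¹:ℝ)^(k+1))^(-s)) * ENNReal.ofReal ((2*(2⁻¹:ℝ)^k)^(N+1)) := by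
            refine le_trans hb1 ?_
            gcongr
        _ = ENNReal.ofReal ((2:ℝ)^(s + ((N:ℝ)+1))) * (ENNReal.ofReal ((2:ℝ)^(s - ((N:ℝ)+1))))^k := by
            rw [← ENNReal.ofReal_mul (Real.rpow_nonneg (le_of_lt (pow_pos hc _)) _),
              ← ENNReal.ofReal_pow (Real.rpow_nonneg (by norm_num) _),
              ← ENNReal.ofReal_mul (Real.rpow_nonneg (by norm_num) _)]
            congr 1
            exact rpow_two_identity k s N
    have hρ : ENNReal.ofReal ((2:ℝ)^(s - ((N:ℝ)+1))) < 1 := by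
      rw [ENNReal.ofReal_lt_one]
      exact Real.rpow_lt_one_of_one_lt_of_neg one_lt_two (by linarith)
    calc (∫⁻ y in S, w y ∂volume)
        = ∫⁻ y in S \ {pzero}, w y ∂volume := setLIntegral_congr hSae
      _ ≤ ∫⁻ y in ⋃ k, T k, w y ∂volume := lintegral_mono_set hSsub
      _ ≤ ∑' k, ∫⁻ y in T k, w y ∂volume := lintegral_iUnion_le _ _
      _ ≤ ∑' k : ℕ, ENNReal.ofReal ((2:ℝ)^(s + ((N:ℝ)+1)))
            * (ENNReal.ofReal ((2:ℝ)^(s - ((N:ℝ)+1))))^k := ENNReal.tsum_le_tsum hTk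
      _ = ENNReal.ofReal ((2:ℝ)^(s + ((N:ℝ)+1)))
            * (1 - ENNReal.ofReal ((2:ℝ)^(s - ((N:ℝ)+1))))⁻¹ := by
            rw [ENNReal.tsum_mul_left, ENNReal.tsum_geometric]
      _ < ⊤ := by
            apply ENNReal.mul_lt_top ENNReal.ofReal_lt_top
            rw [ENNReal.inv_lt_top]
            exact tsub_pos_of_lt hρ
  have hsplit : Dset (pzero : 𝔼) = (Dset pzero ∩ ball pzero 1) ∪ (Dset pzero \ ball pzero 1) := by
    rw [inter_union_diff]
  rw [hsplit]
  exact hinner.union houter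


omit [NeZero N] in
lemma integral_identity (p : 𝔼) (hp : ‖p‖ = 1) {s ε : ℝ} (hNs : (N:ℝ) < s) (hε : 0 < ε) :
    ∫ y in (ball p ε)ᶜ, tauInd (ball (0:𝔼) 1) y * ‖y - p‖ ^ (-s)
      = ∫ y in (ball p ε)ᶜ ∩ Dset p, ‖y - p‖ ^ (-s) := by
  classical
  set w : 𝔼 → ℝ := fun y => ‖y - p‖ ^ (-s) with hwdef
  set A : Set 𝔼 := (ball p ε)ᶜ with hA
  set B : Set 𝔼 := ball (0:𝔼) 1 with hB
  have hwA : IntegrableOn w A := integrableOn_rpow_compl_ball p hNs hε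
  have hBm : MeasurableSet B := measurableSet_ball
  have hAm : MeasurableSet A := measurableSet_ball.compl
  have hpt : ∀ y, tauInd B y * w y = Bᶜ.indicator w y - B.indicator w y := by
    intro y
    by_cases h : y ∈ B <;> simp [tauInd, h, Set.indicator]
  have hI1 : IntegrableOn (Bᶜ.indicator w) A := hwA.indicator hBm.compl
  have hI2 : IntegrableOn (B.indicator w) A := hwA.indicator hBm
  have hsplit1 : ∫ y in A, tauInd B y * w y
      = (∫ y in A, Bᶜ.indicator w y) - ∫ y in A, B.indicator w y := by
    rw [← integral_sub hI1 hI2]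
    exact integral_congr_ae (ae_of_all _ hpt)
  rw [hsplit1, setIntegral_indicator hBm.compl, setIntegral_indicator hBm]
  -- change of variables for the inner ℝ part
  have hRmp := measurePreserving_Rmap p
  have hRemb := measurableEmbedding_Rmap p
  have hRcont : Continuous (Rmap p) := (RmapHomeo p).continuous
  have hApre : Rmap p ⁻¹' A = A := by
    ext y
    simp only [hA, Set.mem_preimage, Set.mem_compl_iff, mem_ball, dist_eq_norm]
    rw [norm_Rmap_sub]
  have hchange : ∫ y in A ∩ B, w y = ∫ y in A ∩ (Rmap p ⁻¹' B), w y := by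
    have h1 := hRmp.setIntegral_preimage_emb hRemb w (A ∩ B)
    have h2 : ∀ x, w (Rmap p x) = w x := fun x => by
      simp only [hwdef]
      rw [norm_Rmap_sub]
    have h3 : Rmap p ⁻¹' (A ∩ B) = A ∩ (Rmap p ⁻¹' B) := by
      rw [Set.preimage_inter, hApre]
    rw [h3] at h1
    rw [← h1]
    exact integral_congr_ae (ae_of_all _ fun x => h2 x)
  have hcomplB : Bᶜ = {y : 𝔼 | 1 ≤ ‖y‖} := by
    ext y
    simp [hB, mem_ball, dist_eq_norm, not_lt]
  have hRBsub : Rmap p ⁻¹' B ⊆ Bᶜ := by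
    intro y hy
    have : ‖Rmap p y‖ < 1 := by simpa [hB, mem_ball, dist_eq_norm] using hy
    have h2 : 1 < ‖Rmap p (Rmap p y)‖ := one_lt_norm_Rmap p hp this
    rw [Rmap_involutive p y] at h2
    rw [hcomplB]
    exact le_of_lt h2
  have hunion : A ∩ Bᶜ = (A ∩ (Rmap p ⁻¹' B)) ∪ (A ∩ Dset p) := by
    ext y
    constructor
    · rintro ⟨hyA, hyB⟩
      by_cases h : ‖Rmap p y‖ < 1
      · exact Or.inl ⟨hyA, by simpa [hB, mem_ball, dist_eq_norm] using h⟩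
      · refine Or.inr ⟨hyA, ⟨?_, not_lt.mp h⟩⟩
        rw [hcomplB] at hyB
        exact hyB
    · rintro (⟨hyA, hyB⟩ | ⟨hyA, hyD⟩)
      · exact ⟨hyA, hRBsub hyB⟩
      · refine ⟨hyA, ?_⟩
        rw [hcomplB]
        exact hyD.1
  have hdisj : Disjoint (A ∩ (Rmap p ⁻¹' B)) (A ∩ Dset p) := by
    rw [Set.disjoint_left]
    rintro y ⟨_, hy1⟩ ⟨_, hy2⟩
    have : ‖Rmap p y‖ < 1 := by simpa [hB, mem_ball, dist_eq_norm] using hy1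
    exact absurd hy2.2 (not_le.mpr this)
  have hmD : MeasurableSet (A ∩ Dset p) := hAm.inter (measurableSet_Dset p)
  have hIu1 : IntegrableOn w (A ∩ (Rmap p ⁻¹' B)) :=
    hwA.mono_set Set.inter_subset_left
  have hIu2 : IntegrableOn w (A ∩ Dset p) := hwA.mono_set Set.inter_subset_left
  calc (∫ y in A ∩ Bᶜ, w y) - ∫ y in A ∩ B, w y
      = (∫ y in A ∩ (Rmap p ⁻¹' B), w y) + (∫ y in A ∩ Dset p, w y)
        - ∫ y in A ∩ (Rmap p ⁻¹' B), w y := by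
        rw [hchange, hunion, setIntegral_union hdisj hmD hIu1 hIu2]
    _ = ∫ y in A ∩ Dset p, w y := by ring

lemma tendsto_aux (p : 𝔼) {s : ℝ} (hNs : (N:ℝ) < s)
    (hInt : IntegrableOn (fun y : 𝔼 => ‖y - p‖ ^ (-s)) (Dset p)) :
    Tendsto (fun ε : ℝ => ∫ y in (ball p ε)ᶜ ∩ Dset p, ‖y - p‖ ^ (-s))
      (nhdsWithin 0 (Set.Ioi 0)) (nhds (∫ y in Dset p, ‖y - p‖ ^ (-s))) := by
  set w : 𝔼 → ℝ := fun y => ‖y - p‖ ^ (-s) with hwdef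
  have hwm : Measurable w := by fun_prop
  have hkey : ∀ ε : ℝ, ∫ y in (ball p ε)ᶜ ∩ Dset p, w y
      = ∫ y in Dset p, ((ball p ε)ᶜ).indicator w y := by
    intro ε
    rw [setIntegral_indicator measurableSet_ball.compl, Set.inter_comm]
  simp_rw [hkey]
  apply tendsto_integral_filter_of_dominated_convergence w
  · exact Eventually.of_forall fun ε =>
      (hwm.indicator measurableSet_ball.compl).aestronglyMeasurable
  · refine Eventually.of_forall fun ε => ae_of_all _ fun y => ?_
    have h1 : ‖((ball p ε)ᶜ).indicator w y‖ ≤ ‖w y‖ := norm_indicator_le_norm_self _ _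
    rwa [Real.norm_eq_abs (w y), abs_of_nonneg (Real.rpow_nonneg (norm_nonneg _) _)] at h1
  · exact hInt
  · have hae : ∀ᵐ (y : 𝔼) ∂(volume.restrict (Dset p)), y ≠ p := by
      refine ae_restrict_of_ae ?_
      rw [ae_iff]
      have : {y : 𝔼 | ¬ y ≠ p} = {p} := by ext y; simp
      rw [this]
      exact measure_singleton p
    filter_upwards [hae] with y hy
    have hd0 : 0 < ‖y - p‖ := by
      rw [norm_pos_iff, sub_ne_zero]
      exact hy
    apply Tendsto.congr' (f₁ := fun _ => w y) ?_ tendsto_const_nhds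
    have hmem : Set.Ioo (0:ℝ) ‖y - p‖ ∈ nhdsWithin (0:ℝ) (Set.Ioi 0) :=
      Ioo_mem_nhdsGT_of_mem ⟨le_rfl, hd0⟩
    rw [eventuallyEq_iff_exists_mem]
    refine ⟨Set.Ioo (0:ℝ) ‖y - p‖, hmem, fun ε hε => ?_⟩
    have : y ∈ (ball p ε)ᶜ := by
      simp only [Set.mem_compl_iff, mem_ball, dist_eq_norm, not_lt]
      exact le_of_lt hε.2
    show w y = ((ball p ε)ᶜ).indicator w y
    exact (Set.indicator_of_mem this w).symm

lemma pos_integral [NeZero N] (hN : 2 ≤ N) {s : ℝ} (hNs : (N:ℝ) < s)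
    (hInt : IntegrableOn (fun y : 𝔼 => ‖y - pzero‖ ^ (-s)) (Dset pzero)) :
    0 < ∫ y in Dset (pzero : 𝔼), ‖y - pzero‖ ^ (-s) := by
  set w : 𝔼 → ℝ := fun y => ‖y - pzero‖ ^ (-s) with hwdef
  rw [setIntegral_pos_iff_support_of_nonneg_ae
    (ae_of_all _ fun y => Real.rpow_nonneg (norm_nonneg _) _) hInt]
  set q : 𝔼 := EuclideanSpace.single (⟨1, by omega⟩ : Fin N) (2:ℝ) with hq
  have hq0 : q 0 = 0 := by
    rw [hq, EuclideanSpace.single_apply]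
    have : (0 : Fin N) ≠ (⟨1, by omega⟩ : Fin N) := by
      intro h
      have := congrArg Fin.val h
      simp at this
    simp [this]
  have hqnorm : ‖q‖ = 2 := by
    rw [hq, EuclideanSpace.norm_single]
    norm_num
  have hsub : ball q (1/2) ⊆ Function.support w ∩ Dset pzero := by
    intro y hy
    have hyq : ‖y - q‖ < 1/2 := by simpa [mem_ball, dist_eq_norm] using hy
    have hny : (3:ℝ)/2 ≤ ‖y‖ := by
      have := norm_sub_norm_le q y
      have h2 : ‖q - y‖ = ‖y - q‖ := norm_sub_rev q y
      rw [h2, hqnorm] at this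
      linarith
    have hip : (inner ℝ y (pzero : 𝔼) : ℝ) ≤ 1/2 := by
      rw [inner_pzero]
      have h1 : y 0 = (y - q) 0 + q 0 := by
        have : (y - q : 𝔼) 0 = y 0 - q 0 := rfl
        rw [this]; ring
      have h2 := abs_coord_le (y - q) 0
      rw [h1, hq0, add_zero]
      calc (y - q : 𝔼) 0 ≤ |(y - q : 𝔼) 0| := le_abs_self _
        _ ≤ ‖y - q‖ := h2
        _ ≤ 1/2 := le_of_lt hyq
    have hy1 : 1 ≤ ‖y‖ := by linarith
    have hyD : y ∈ Dset (pzero : 𝔼) := by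
      refine ⟨hy1, ?_⟩
      have hRsq := norm_Rmap_sq (pzero : 𝔼) pzero_norm y
      nlinarith [norm_nonneg (Rmap (pzero : 𝔼) y), norm_nonneg y]
    refine ⟨?_, hyD⟩
    have hyne : y - pzero ≠ 0 := by
      intro h
      have : y = pzero := by rwa [sub_eq_zero] at h
      rw [this, pzero_norm] at hy1
      rw [this] at hny
      rw [pzero_norm] at hny
      linarith
    have : 0 < w y := Real.rpow_pos_of_pos (norm_pos_iff.mpr hyne) _
    exact ne_of_gt this
  calc (0:ℝ≥0∞) < volume (ball q (1/2)) := measure_ball_pos volume q (by norm_num)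
    _ ≤ volume (Function.support w ∩ Dset pzero) := measure_mono hsub

lemma transport [NeZero N] (p : 𝔼) (hp : ‖p‖ = 1) (s ε : ℝ) :
    ∫ y in (ball p ε)ᶜ, tauInd (ball (0:𝔼) 1) y * ‖y - p‖ ^ (-s)
      = ∫ y in (ball (pzero : 𝔼) ε)ᶜ, tauInd (ball (0:𝔼) 1) y * ‖y - pzero‖ ^ (-s) := by
  set e : 𝔼 ≃ₗᵢ[ℝ] 𝔼 := Submodule.reflection (ℝ ∙ ((pzero:𝔼) - p))ᗮ with he_def
  have he : e pzero = p := Submodule.reflection_sub (by rw [pzero_norm, hp])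
  have hep : MeasurePreserving (⇑e) volume volume := e.measurePreserving
  have hemb : MeasurableEmbedding (⇑e) := e.toHomeomorph.measurableEmbedding
  have key := hep.setIntegral_preimage_emb hemb
    (fun y => tauInd (ball (0:𝔼) 1) y * ‖y - p‖ ^ (-s)) ((ball p ε)ᶜ)
  rw [← key]
  have hpre : ⇑e ⁻¹' ((ball p ε)ᶜ) = (ball (pzero:𝔼) ε)ᶜ := by
    ext x
    simp only [Set.mem_preimage, Set.mem_compl_iff, mem_ball, dist_eq_norm]
    rw [show e x - p = e (x - pzero) by rw [map_sub, he], e.norm_map]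
  rw [hpre]
  apply integral_congr_ae (ae_of_all _ fun x => ?_)
  have h1 : ‖e x - p‖ = ‖x - pzero‖ := by
    rw [show e x - p = e (x - pzero) by rw [map_sub, he], e.norm_map]
  have h2 : tauInd (ball (0:𝔼) 1) (e x) = tauInd (ball (0:𝔼) 1) x := by
    have hmem : e x ∈ ball (0:𝔼) 1 ↔ x ∈ ball (0:𝔼) 1 := by
      simp only [mem_ball, dist_eq_norm, sub_zero]
      rw [e.norm_map]
    by_cases h : x ∈ ball (0:𝔼) 1
    · simp [tauInd, h, hmem.mpr h, Set.indicator]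
    · have h' : e x ∉ ball (0:𝔼) 1 := fun hh => h (hmem.mp hh)
      simp [tauInd, h, h', Set.indicator]
  rw [h1, h2]

end NMCaux

theorem nmc_of_unit_sphere (N : ℕ) (hN : 2 ≤ N) (α : ℝ) (hα : α ∈ Set.Ioo (0:ℝ) 1) :
    ∃ H : ℝ, 0 < H ∧ ∀ p : EuclideanSpace ℝ (Fin N), ‖p‖ = 1 →
      Tendsto (fun ε : ℝ =>
          ∫ y in (Metric.ball p ε)ᶜ,
            tauInd (Metric.ball (0 : EuclideanSpace ℝ (Fin N)) 1) y * ‖y - p‖ ^ (-((N:ℝ) + α)))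
        (nhdsWithin 0 (Set.Ioi 0)) (nhds H) := by
  haveI : NeZero N := ⟨by omega⟩
  obtain ⟨hα0, hα1⟩ := hα
  have hNs : (N:ℝ) < (N:ℝ) + α := by linarith
  have hs1 : (N:ℝ) + α < (N:ℝ) + 1 := by linarith
  have hInt := integrableOn_Dset (N := N) hNs hs1
  refine ⟨∫ y in Dset (pzero : EuclideanSpace ℝ (Fin N)), ‖y - pzero‖ ^ (-((N:ℝ)+α)),
    pos_integral hN hNs hInt, ?_⟩
  intro p hp
  have htr : ∀ ε : ℝ, (∫ y in (Metric.ball p ε)ᶜ,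
        tauInd (Metric.ball (0:EuclideanSpace ℝ (Fin N)) 1) y * ‖y - p‖ ^ (-((N:ℝ)+α)))
      = ∫ y in (Metric.ball (pzero : EuclideanSpace ℝ (Fin N)) ε)ᶜ,
          tauInd (Metric.ball (0:EuclideanSpace ℝ (Fin N)) 1) y * ‖y - pzero‖ ^ (-((N:ℝ)+α)) :=
    fun ε => transport p hp ((N:ℝ)+α) ε
  simp_rw [htr]
  have hmain := tendsto_aux (pzero : EuclideanSpace ℝ (Fin N)) hNs hInt
  apply hmain.congr'
  filter_upwards [self_mem_nhdsWithin] with ε hε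
  exact (integral_identity pzero pzero_norm hNs hε).symm
end
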